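/- Let n = 2 and m = (m_1, m_2) a pair of nonnegative integers, and k ≥ 1. The kernel of f_{k,m} : V_{k−1} → V_k has dimension 1 if 0 ≤ m_1 < k, 0 ≤ m_2 < k, and 0 ≤ m_1 + m_2 − k + 1 < k; otherwise f_{k,m} is injective. -/

import Mathlib

open Finsupp

/-- Multiindices `J : Fin n → ℕ` of total degree `j`. -/
abbrev MIdx (n j : ℕ) : Type := {J : Fin n → ℕ // ∑ i, J i = j}

/-- The complex vector space `V_j` with basis `{e_J : |J| = j}`. -/
abbrev V (n j : ℕ) : Type := MIdx n j →₀ ℂ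

/-- `J + 1ᵢ` : the multiindex `J` with its `i`-th entry increased by 1. -/
def incr {n : ℕ} (J : Fin n → ℕ) (i : Fin n) : Fin n → ℕ :=
  Function.update J i (J i + 1)

lemma sum_incr {n : ℕ} (J : Fin n → ℕ) (i : Fin n) :
    ∑ x, incr J i x = (∑ x, J x) + 1 := by
  unfold incr
  rw [Finset.sum_update_of_mem (Finset.mem_univ i),
    Finset.sum_eq_sum_sdiff_singleton_add (Finset.mem_univ i) J]
  ring

/-- The map `f_{j+1,m} : V_j → V_{j+1}`, `e_J ↦ ∑ᵢ (jᵢ+1)(mᵢ−jᵢ) e_{J+1ᵢ}`. -/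
noncomputable def fMap (n : ℕ) (m : Fin n → ℕ) (j : ℕ) : V n j →ₗ[ℂ] V n (j + 1) :=
  Finsupp.lift (V n (j + 1)) ℂ (MIdx n j) fun J =>
    ∑ i, (((J.1 i : ℂ) + 1) * ((m i : ℂ) - (J.1 i : ℂ))) •
      Finsupp.single (⟨incr J.1 i, by rw [sum_incr, J.2]⟩ : MIdx n (j + 1)) (1 : ℂ)

/-- `d(m,j)`: the number of multiindices `J` with `J i ≤ m i` for all `i` and `|J| = j`. -/
noncomputable def dCount (n : ℕ) (m : Fin n → ℕ) (j : ℤ) : ℕ :=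
  Set.ncard {J : Fin n → ℕ | (∀ i, J i ≤ m i) ∧ ∑ i, (J i : ℤ) = j}

/-- `w(m,j) = d(m,j) − d(m,j−1)`. -/
noncomputable def w (n : ℕ) (m : Fin n → ℕ) (j : ℤ) : ℤ :=
  (dCount n m j : ℤ) - (dCount n m (j - 1) : ℤ)

namespace KTF


noncomputable instance (n j : ℕ) : Fintype (MIdx n j) :=
  Fintype.ofInjective
    (fun J (i : Fin n) => (⟨J.1 i, Nat.lt_succ_of_le ((Finset.single_le_sum
        (fun i _ => Nat.zero_le (J.1 i)) (Finset.mem_univ i)).trans (le_of_eq J.2))⟩ : Fin (j + 1)))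
    (fun J J' h => Subtype.ext (funext fun i => congrArg Fin.val (congrFun h i)))

/-- make a 2-variable multiindex -/
def mk2 {j : ℕ} (a b : ℕ) (h : a + b = j) : MIdx 2 j :=
  ⟨![a, b], by simp [Fin.sum_univ_two, h]⟩

lemma mk2_eq_iff {j : ℕ} {a b a' b' : ℕ} {h : a + b = j} {h' : a' + b' = j} :
    mk2 a b h = mk2 a' b' h' ↔ (a = a' ∧ b = b') := by
  constructor
  · intro he
    have := congrArg (fun J => J.1) he
    simp only [mk2] at this
    exact ⟨congrFun this 0, congrFun this 1⟩
  · rintro ⟨rfl, rfl⟩; rfl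

lemma eq_mk2 {j : ℕ} (J : MIdx 2 j) :
    J = mk2 (J.1 0) (J.1 1) (by simpa [Fin.sum_univ_two] using J.2) := by
  apply Subtype.ext
  funext i
  fin_cases i <;> rfl

lemma incr0 (a b : ℕ) : incr ![a, b] 0 = ![a + 1, b] := by
  funext i; fin_cases i <;> simp [incr, Function.update]

lemma incr1 (a b : ℕ) : incr ![a, b] 1 = ![a, b + 1] := by
  funext i; fin_cases i <;> simp [incr, Function.update]

/-- the coefficient of `x` at the index `(a, b)`, or `0` if out of range. -/
noncomputable def xat {j : ℕ} (x : V 2 j) (a b : ℕ) : ℂ :=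
  if h : a + b = j then x (mk2 a b h) else 0

lemma xat_add {j : ℕ} (x y : V 2 j) (a b : ℕ) :
    xat (x + y) a b = xat x a b + xat y a b := by
  unfold xat; split <;> simp

lemma xat_sub {j : ℕ} (x y : V 2 j) (a b : ℕ) :
    xat (x - y) a b = xat x a b - xat y a b := by
  unfold xat; split <;> simp

lemma xat_smul {j : ℕ} (t : ℂ) (x : V 2 j) (a b : ℕ) :
    xat (t • x) a b = t * xat x a b := by
  unfold xat; split <;> simp

lemma xat_not {j : ℕ} (x : V 2 j) (a b : ℕ) (h : ¬ (a + b = j)) : xat x a b = 0 :=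
  dif_neg h

lemma xat_single {j : ℕ} (a a' : ℕ) (ha : a + a' = j) (cJ : ℂ) (p q : ℕ) :
    xat (Finsupp.single (mk2 a a' ha) cJ) p q = if p = a ∧ q = a' then cJ else 0 := by
  unfold xat
  split
  · next hpq =>
    rw [Finsupp.single_apply]
    by_cases hc : p = a ∧ q = a'
    · rw [if_pos hc, if_pos]; exact (mk2_eq_iff.mpr ⟨hc.1.symm, hc.2.symm⟩)
    · rw [if_neg hc, if_neg]
      intro he
      obtain ⟨h1, h2⟩ := mk2_eq_iff.mp he
      exact hc ⟨h1.symm, h2.symm⟩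
  · next hpq =>
    rw [if_neg]
    rintro ⟨rfl, rfl⟩; omega

lemma ite_mk2 {j : ℕ} {p q p' q' : ℕ} {hpq : p + q = j} {hpq' : p' + q' = j} (c : ℂ) :
    (if mk2 p q hpq = mk2 p' q' hpq' then c else 0) = if p = p' ∧ q = q' then c else 0 := by
  simp [mk2_eq_iff]

lemma fMap_apply (m : Fin 2 → ℕ) (j : ℕ) (x : V 2 j) (b b' : ℕ) (h : b + b' = j + 1) :
    fMap 2 m j x (mk2 b b' h) =
      xat x (b - 1) b' * b * ((m 0 : ℂ) - b + 1)
        + xat x b (b' - 1) * b' * ((m 1 : ℂ) - b' + 1) := by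
  induction x using Finsupp.induction_linear with
  | zero => simp [xat]
  | add f g hf hg => rw [map_add, Finsupp.add_apply, hf, hg, xat_add, xat_add]; ring
  | single J cJ =>
    obtain ⟨a, a', ha, rfl⟩ : ∃ a a' ha, J = mk2 a a' ha :=
      ⟨J.1 0, J.1 1, by simpa [Fin.sum_univ_two] using J.2, eq_mk2 J⟩
    rw [fMap, Finsupp.lift_apply, Finsupp.sum_single_index (by simp)]
    rw [Fin.sum_univ_two]
    have e0 : (⟨incr (mk2 (j := j) a a' ha).1 0, by rw [sum_incr, (mk2 a a' ha).2]⟩ : MIdx 2 (j+1))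
        = mk2 (a+1) a' (by omega) := by
      apply Subtype.ext; show incr ![a, a'] 0 = _; rw [incr0]; rfl
    have e1 : (⟨incr (mk2 (j := j) a a' ha).1 1, by rw [sum_incr, (mk2 a a' ha).2]⟩ : MIdx 2 (j+1))
        = mk2 a (a'+1) (by omega) := by
      apply Subtype.ext; show incr ![a, a'] 1 = _; rw [incr1]; rfl
    have v0 : ((mk2 (j := j) a a' ha).1 0 : ℂ) = (a : ℂ) := rfl
    have v1 : ((mk2 (j := j) a a' ha).1 1 : ℂ) = (a' : ℂ) := rfl
    rw [e0, e1, v0, v1]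
    simp only [Finsupp.add_apply, Finsupp.smul_apply, Finsupp.single_apply, smul_eq_mul]
    rw [ite_mk2, ite_mk2, xat_single, xat_single]
    rcases b with _ | b0
    · -- b = 0, b' = j + 1
      obtain rfl : b' = j + 1 := by omega
      simp only [Nat.add_sub_cancel, Nat.zero_sub]
      rw [if_neg (show ¬ (a + 1 = 0 ∧ a' = j + 1) by rintro ⟨h1, -⟩; omega)]
      rw [if_neg (show ¬ ((0:ℕ) = a ∧ j + 1 = a') by rintro ⟨-, h2⟩; omega)]
      by_cases hA : a = 0
      · rw [hA, show a' = j by omega]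
        rw [if_pos (show (0:ℕ) = 0 ∧ j + 1 = j + 1 from ⟨rfl, rfl⟩)]
        rw [if_pos (show (0:ℕ) = 0 ∧ j = j from ⟨rfl, rfl⟩)]
        push_cast; ring
      · rw [if_neg (show ¬ (a = 0 ∧ a' + 1 = j + 1) by rintro ⟨h1, -⟩; omega)]
        rw [if_neg (show ¬ ((0:ℕ) = a ∧ j = a') by rintro ⟨h1, -⟩; omega)]
        push_cast; ring
    · rcases b' with _ | b1
      · -- b = b0 + 1, b' = 0 ; b0 = j
        obtain rfl : b0 = j := by omega
        simp only [Nat.add_sub_cancel, Nat.zero_sub]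
        rw [if_neg (show ¬ (a = b0 + 1 ∧ a' + 1 = 0) by rintro ⟨-, h2⟩; omega)]
        rw [if_neg (show ¬ (b0 + 1 = a ∧ (0:ℕ) = a') by rintro ⟨h1, -⟩; omega)]
        by_cases hA : a = b0
        · rw [hA, show a' = 0 by omega]
          rw [if_pos (show b0 + 1 = b0 + 1 ∧ (0:ℕ) = 0 from ⟨rfl, rfl⟩)]
          rw [if_pos (show b0 = b0 ∧ (0:ℕ) = 0 from ⟨rfl, rfl⟩)]
          push_cast; ring
        · rw [if_neg (show ¬ (a + 1 = b0 + 1 ∧ a' = 0) by rintro ⟨h1, -⟩; omega)]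
          rw [if_neg (show ¬ (b0 = a ∧ (0:ℕ) = a') by rintro ⟨h1, -⟩; omega)]
          push_cast; ring
      · -- b = b0 + 1, b' = b1 + 1
        simp only [Nat.add_sub_cancel]
        by_cases hA : a = b0
        · rw [hA, show a' = b1 + 1 by omega]
          rw [if_pos (show b0 + 1 = b0 + 1 ∧ b1 + 1 = b1 + 1 from ⟨rfl, rfl⟩)]
          rw [if_pos (show b0 = b0 ∧ b1 + 1 = b1 + 1 from ⟨rfl, rfl⟩)]
          rw [if_neg (show ¬ (b0 = b0 + 1 ∧ b1 + 1 + 1 = b1 + 1) by rintro ⟨h1, -⟩; omega)]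
          rw [if_neg (show ¬ (b0 + 1 = b0 ∧ b1 = b1 + 1) by rintro ⟨h1, -⟩; omega)]
          push_cast; ring
        · by_cases hB : a = b0 + 1
          · rw [hB, show a' = b1 by omega]
            rw [if_pos (show b0 + 1 = b0 + 1 ∧ b1 + 1 = b1 + 1 from ⟨rfl, rfl⟩)]
            rw [if_pos (show b0 + 1 = b0 + 1 ∧ b1 = b1 from ⟨rfl, rfl⟩)]
            rw [if_neg (show ¬ (b0 + 1 + 1 = b0 + 1 ∧ b1 = b1 + 1) by rintro ⟨h1, -⟩; omega)]
            rw [if_neg (show ¬ (b0 = b0 + 1 ∧ b1 + 1 = b1) by rintro ⟨h1, -⟩; omega)]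
            push_cast; ring
          · rw [if_neg (show ¬ (a + 1 = b0 + 1 ∧ a' = b1 + 1) by rintro ⟨h1, -⟩; omega)]
            rw [if_neg (show ¬ (a = b0 + 1 ∧ a' + 1 = b1 + 1) by rintro ⟨h1, -⟩; omega)]
            rw [if_neg (show ¬ (b0 = a ∧ b1 + 1 = a') by rintro ⟨h1, -⟩; omega)]
            rw [if_neg (show ¬ (b0 + 1 = a ∧ b1 = a') by rintro ⟨h1, -⟩; omega)]
            push_cast; ring



section Seq
variable {K m0 m1 : ℕ} {c : ℕ → ℂ}

/-- forward vanishing -/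
lemma fwd (hE0 : c 0 * ((K:ℂ) + 1) * ((m1:ℂ) - K) = 0)
    (hE : ∀ b : ℕ, c b * ((b:ℂ) + 1) * ((m0:ℂ) - b)
      + c (b+1) * ((K:ℂ) - b) * ((m1:ℂ) - K + ((b:ℂ) + 1)) = 0)
    (t : ℕ) (ht : t ≤ K) (hden : ∀ b : ℕ, b ≤ t → (m1:ℂ) - K + b ≠ 0) :
    ∀ b, b ≤ t → c b = 0 := by
  intro b
  induction b with
  | zero =>
    intro _
    have h1 : ((K:ℂ) + 1) ≠ 0 := by
      have : ((K:ℤ) + 1) ≠ 0 := by omega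
      exact_mod_cast this
    have h2 : (m1:ℂ) - K ≠ 0 := by simpa using hden 0 (Nat.zero_le t)
    rcases mul_eq_zero.mp hE0 with h | h
    · rcases mul_eq_zero.mp h with h' | h'
      · exact h'
      · exact absurd h' h1
    · exact absurd h h2
  | succ b ih =>
    intro hb
    have hcb : c b = 0 := ih (by omega)
    have hEb := hE b
    rw [hcb] at hEb
    simp only [zero_mul, zero_add] at hEb
    have h1 : (K:ℂ) - b ≠ 0 := by
      have : ((K:ℤ) - b) ≠ 0 := by omega
      exact_mod_cast this
    have h2 : (m1:ℂ) - K + ((b:ℂ) + 1) ≠ 0 := by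
      have := hden (b+1) hb
      push_cast at this
      convert this using 1
    rcases mul_eq_zero.mp hEb with h | h
    · rcases mul_eq_zero.mp h with h' | h'
      · exact h'
      · exact absurd h' h1
    · exact absurd h h2

/-- backward vanishing -/
lemma bwd (hsupp : ∀ b, K < b → c b = 0)
    (hE : ∀ b : ℕ, c b * ((b:ℂ) + 1) * ((m0:ℂ) - b)
      + c (b+1) * ((K:ℂ) - b) * ((m1:ℂ) - K + ((b:ℂ) + 1)) = 0)
    (t : ℕ) (hden : ∀ b, t ≤ b → b ≤ K → (m0:ℂ) - b ≠ 0) :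
    ∀ b, t ≤ b → c b = 0 := by
  have step : ∀ b, t ≤ b → b ≤ K → c (b+1) = 0 → c b = 0 := by
    intro b htb hbK hnext
    have hEb := hE b
    rw [hnext] at hEb
    simp only [zero_mul, add_zero] at hEb
    have h1 : ((b:ℂ) + 1) ≠ 0 := by
      have : ((b:ℤ) + 1) ≠ 0 := by omega
      exact_mod_cast this
    have h2 := hden b htb hbK
    rcases mul_eq_zero.mp hEb with h | h
    · rcases mul_eq_zero.mp h with h' | h'
      · exact h'
      · exact absurd h' h1
    · exact absurd h h2
  have key : ∀ d b, K ≤ b + d → t ≤ b → c b = 0 := by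
    intro d
    induction d with
    | zero =>
      intro b hbd htb
      rcases Nat.lt_or_ge K b with h | h
      · exact hsupp b h
      · have hbK : b = K := by omega
        exact step b htb (by omega) (hsupp (b+1) (by omega))
    | succ d ih =>
      intro b hbd htb
      rcases le_or_gt K (b + d) with h | h
      · exact ih b h htb
      · exact step b htb (by omega) (ih (b+1) (by omega) (by omega))
  intro b htb
  exact key K b (by omega) htb

/-- in the middle zone the coefficients propagate; vanishing at `K - m1` kills everything -/
lemma mid (hm0 : m0 ≤ K) (hm1 : m1 ≤ K) (hK : K ≤ m0 + m1)
    (hsupp : ∀ b, K < b → c b = 0)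
    (hE0 : c 0 * ((K:ℂ) + 1) * ((m1:ℂ) - K) = 0)
    (hE : ∀ b : ℕ, c b * ((b:ℂ) + 1) * ((m0:ℂ) - b)
      + c (b+1) * ((K:ℂ) - b) * ((m1:ℂ) - K + ((b:ℂ) + 1)) = 0)
    (hp : c (K - m1) = 0) : ∀ b, c b = 0 := by
  have part1 : ∀ b, b ≤ m0 → c b = 0 := by
    intro b
    induction b with
    | zero =>
      intro _
      by_cases hz : K - m1 = 0
      · rwa [hz] at hp
      · have h1 : ((K:ℂ) + 1) ≠ 0 := by
          have : ((K:ℤ) + 1) ≠ 0 := by omega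
          exact_mod_cast this
        have h2 : (m1:ℂ) - K ≠ 0 := by
          have : ((m1:ℤ) - K) ≠ 0 := by omega
          exact_mod_cast this
        rcases mul_eq_zero.mp hE0 with h | h
        · rcases mul_eq_zero.mp h with h' | h'
          · exact h'
          · exact absurd h' h1
        · exact absurd h h2
    | succ b ih =>
      intro hb
      by_cases hq : b + 1 = K - m1
      · rwa [hq]
      · have hcb : c b = 0 := ih (by omega)
        have hEb := hE b
        rw [hcb] at hEb
        simp only [zero_mul, zero_add] at hEb
        have h1 : (K:ℂ) - b ≠ 0 := by
          have : ((K:ℤ) - b) ≠ 0 := by omega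
          exact_mod_cast this
        have h2 : (m1:ℂ) - K + ((b:ℂ) + 1) ≠ 0 := by
          have : ((m1:ℤ) - K + (b + 1)) ≠ 0 := by omega
          have h3 : (((m1:ℤ) - K + (b + 1) : ℤ) : ℂ) ≠ 0 := Int.cast_ne_zero.mpr this
          push_cast at h3
          convert h3 using 1
        rcases mul_eq_zero.mp hEb with h | h
        · rcases mul_eq_zero.mp h with h' | h'
          · exact h'
          · exact absurd h' h1
        · exact absurd h h2
  have part2 : ∀ b, m0 + 1 ≤ b → c b = 0 :=
    bwd hsupp hE (m0+1) (fun b h1 h2 => by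
      have : ((m0:ℤ) - b) ≠ 0 := by omega
      exact_mod_cast this)
  intro b
  rcases le_or_gt b m0 with h | h
  · exact part1 b h
  · exact part2 b (by omega)

end Seq

/-- the explicit kernel coefficient sequence -/
noncomputable def c0 (K m0 m1 : ℕ) : ℕ → ℂ
  | 0 => if K ≤ m1 then 1 else 0
  | b + 1 =>
    if b + 1 < K - m1 then 0
    else if b + 1 = K - m1 then 1
    else if b + 1 ≤ m0 then
      - c0 K m0 m1 b * ((b:ℂ) + 1) * ((m0:ℂ) - b) / (((K:ℂ) - b) * ((m1:ℂ) - K + ((b:ℂ) + 1)))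
    else 0

lemma c0_lt {K m0 m1 b : ℕ} (h : b < K - m1) : c0 K m0 m1 b = 0 := by
  rcases b with _ | b
  · rw [c0, if_neg (by omega)]
  · rw [c0, if_pos h]

lemma c0_p {K m0 m1 : ℕ} : c0 K m0 m1 (K - m1) = 1 := by
  rcases hp : K - m1 with _ | b
  · rw [c0, if_pos (by omega)]
  · rw [c0, if_neg (by omega), if_pos hp.symm]

lemma c0_gt {K m0 m1 b : ℕ} (hpm : K - m1 ≤ m0) (h : m0 < b) : c0 K m0 m1 b = 0 := by
  rcases b with _ | b
  · omega
  · rw [c0, if_neg (by omega), if_neg (by omega), if_neg (by omega)]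

lemma c0_E0 {K m0 m1 : ℕ} (hm1 : m1 ≤ K) :
    c0 K m0 m1 0 * ((K:ℂ) + 1) * ((m1:ℂ) - K) = 0 := by
  by_cases h : K ≤ m1
  · have : (m1:ℂ) - K = 0 := by
      have : ((m1:ℤ) - K) = 0 := by omega
      have := congrArg (fun z : ℤ => (z : ℂ)) this
      push_cast at this
      convert this using 1
    rw [this]; ring
  · rw [c0, if_neg h]; ring

lemma c0_E {K m0 m1 : ℕ} (hm0 : m0 ≤ K) (hm1 : m1 ≤ K) (hK : K ≤ m0 + m1) :
    ∀ b : ℕ, c0 K m0 m1 b * ((b:ℂ) + 1) * ((m0:ℂ) - b)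
      + c0 K m0 m1 (b+1) * ((K:ℂ) - b) * ((m1:ℂ) - K + ((b:ℂ) + 1)) = 0 := by
  intro b
  rcases Nat.lt_trichotomy (b+1) (K - m1) with hc | hc | hc
  · rw [c0_lt hc, c0_lt (show b < K - m1 by omega)]; ring
  · have hone : c0 K m0 m1 (b+1) = 1 := by rw [hc]; exact c0_p
    rw [hone, c0_lt (show b < K - m1 by omega)]
    have : (m1:ℂ) - K + ((b:ℂ) + 1) = 0 := by
      have : ((m1:ℤ) - K + (b + 1)) = 0 := by omega
      have := congrArg (fun z : ℤ => (z : ℂ)) this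
      push_cast at this
      convert this using 1
    rw [this]; ring
  · rcases le_or_gt (b+1) m0 with hm | hm
    · rw [show c0 K m0 m1 (b+1)
          = - c0 K m0 m1 b * ((b:ℂ) + 1) * ((m0:ℂ) - b)
              / (((K:ℂ) - b) * ((m1:ℂ) - K + ((b:ℂ) + 1))) from by
        rw [c0, if_neg (by omega), if_neg (by omega), if_pos hm]]
      have h1 : (K:ℂ) - b ≠ 0 := by
        have : ((K:ℤ) - b) ≠ 0 := by omega
        exact_mod_cast this
      have h2 : (m1:ℂ) - K + ((b:ℂ) + 1) ≠ 0 := by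
        have : ((m1:ℤ) - K + (b + 1)) ≠ 0 := by omega
        have h3 : (((m1:ℤ) - K + (b + 1) : ℤ) : ℂ) ≠ 0 := Int.cast_ne_zero.mpr this
        push_cast at h3
        convert h3 using 1
      field_simp
      ring
    · rw [show c0 K m0 m1 (b+1) = 0 from c0_gt (by omega) (by omega)]
      rcases Nat.eq_or_lt_of_le (show m0 ≤ b by omega) with he | he
      · have : (m0:ℂ) - b = 0 := by
          have : ((m0:ℤ) - b) = 0 := by omega
          have := congrArg (fun z : ℤ => (z : ℂ)) this
          push_cast at this
          convert this using 1
        rw [this]; ring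
      · rw [c0_gt (by omega) he]; ring


section Bridge
variable (m : Fin 2 → ℕ) (K : ℕ)

lemma ker_supp (x : V 2 K) : ∀ b, K < b → xat x b (K - b) = 0 :=
  fun b h => xat_not _ _ _ (by omega)

lemma ker_E0 (x : V 2 K) (hx : fMap 2 m K x = 0) :
    xat x 0 (K - 0) * ((K:ℂ) + 1) * ((m 1 : ℂ) - K) = 0 := by
  have h0 : fMap 2 m K x (mk2 0 (K+1) (by omega)) = 0 := by rw [hx]; simp
  rw [fMap_apply] at h0
  simp only [Nat.zero_sub, Nat.add_sub_cancel, Nat.cast_zero, mul_zero, zero_mul,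
    zero_add, Nat.cast_add, Nat.cast_one] at h0
  simp only [Nat.sub_zero]
  linear_combination h0

lemma ker_E (x : V 2 K) (hx : fMap 2 m K x = 0) :
    ∀ b : ℕ, xat x b (K - b) * ((b:ℂ) + 1) * ((m 0 : ℂ) - b)
      + xat x (b+1) (K - (b+1)) * ((K:ℂ) - b) * ((m 1 : ℂ) - K + ((b:ℂ) + 1)) = 0 := by
  intro b
  rcases le_or_gt b K with hbK | hbK
  · have h0 : fMap 2 m K x (mk2 (b+1) (K-b) (by omega)) = 0 := by rw [hx]; simp
    rw [fMap_apply] at h0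
    simp only [Nat.add_sub_cancel] at h0
    rw [show K - b - 1 = K - (b+1) by omega] at h0
    rw [Nat.cast_sub hbK] at h0
    push_cast at h0 ⊢
    linear_combination h0
  · rw [xat_not x b (K-b) (by omega), xat_not x (b+1) (K-(b+1)) (by omega)]
    ring

lemma eq_zero_of_coeffs (x : V 2 K) (hc : ∀ b, xat x b (K - b) = 0) : x = 0 := by
  ext J
  have hJ : J.1 0 + J.1 1 = K := by simpa [Fin.sum_univ_two] using J.2
  have he : J = mk2 (J.1 0) (K - J.1 0) (by omega) :=
    (eq_mk2 J).trans (mk2_eq_iff.mpr ⟨rfl, by omega⟩)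
  have h1 := hc (J.1 0)
  unfold xat at h1
  rw [dif_pos (show J.1 0 + (K - J.1 0) = K by omega)] at h1
  rw [he, Finsupp.coe_zero, Pi.zero_apply]
  exact h1

/-- the explicit element of `V 2 K` with coefficients `c` -/
noncomputable def xC (c : ℕ → ℂ) : V 2 K :=
  Finsupp.equivFunOnFinite.symm (fun J => c (J.1 0))

lemma xC_at (c : ℕ → ℂ) (a a' : ℕ) :
    xat (xC K c) a a' = if a + a' = K then c a else 0 := by
  unfold xat xC
  split
  · next h => exact congrFun (Finsupp.coe_equivFunOnFinite_symm _) _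
  · next h => rfl

lemma xC_ker (c : ℕ → ℂ)
    (hE0 : c 0 * ((K:ℂ) + 1) * ((m 1 : ℂ) - K) = 0)
    (hE : ∀ b : ℕ, c b * ((b:ℂ) + 1) * ((m 0 : ℂ) - b)
      + c (b+1) * ((K:ℂ) - b) * ((m 1 : ℂ) - K + ((b:ℂ) + 1)) = 0) :
    fMap 2 m K (xC K c) = 0 := by
  ext B
  rw [Finsupp.coe_zero, Pi.zero_apply]
  obtain ⟨b, b', h, rfl⟩ : ∃ b b' h, B = mk2 b b' h :=
    ⟨B.1 0, B.1 1, by simpa [Fin.sum_univ_two] using B.2, eq_mk2 B⟩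
  rw [fMap_apply]
  rcases b with _ | b0
  · obtain rfl : b' = K + 1 := by omega
    simp only [Nat.zero_sub, Nat.add_sub_cancel]
    rw [xC_at, xC_at]
    rw [if_neg (by omega), if_pos (show 0 + K = K by omega)]
    push_cast
    linear_combination hE0
  · have hb0K : b0 ≤ K := by omega
    obtain rfl : b' = K - b0 := by omega
    simp only [Nat.add_sub_cancel]
    rw [xC_at, xC_at]
    rw [if_pos (show b0 + (K - b0) = K by omega)]
    rcases lt_or_eq_of_le hb0K with hlt | heq
    · rw [if_pos (by omega)]
      rw [Nat.cast_sub hb0K]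
      push_cast
      linear_combination hE b0
    · rw [if_neg (by omega)]
      rw [show K - b0 = 0 by omega]
      have hKb : (K:ℂ) = b0 := by exact_mod_cast congrArg Nat.cast heq.symm
      have h2 := hE b0
      rw [hKb] at h2
      push_cast
      linear_combination h2

end Bridge


end KTF

/-- For `n = 2`: `dim ker (f_{k,m} : V_{k−1} → V_k) = 1` if `0 ≤ m_1 < k`, `0 ≤ m_2 < k`
and `0 ≤ m_1 + m_2 − k + 1 < k`; otherwise `f_{k,m}` is injective. -/
theorem kernel_two_factors (k : ℕ) (hk : 1 ≤ k) (m : Fin 2 → ℕ) :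
    ((m 0 < k ∧ m 1 < k ∧ 0 ≤ (m 0 : ℤ) + (m 1 : ℤ) - k + 1 ∧ (m 0 : ℤ) + (m 1 : ℤ) - k + 1 < k)
      → Module.finrank ℂ (LinearMap.ker (fMap 2 m (k - 1))) = 1) ∧
    (¬ (m 0 < k ∧ m 1 < k ∧ 0 ≤ (m 0 : ℤ) + (m 1 : ℤ) - k + 1 ∧ (m 0 : ℤ) + (m 1 : ℤ) - k + 1 < k)
      → Function.Injective (fMap 2 m (k - 1))) := by
  obtain ⟨K, rfl⟩ : ∃ K, k = K + 1 := ⟨k - 1, by omega⟩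
  show ((m 0 < K + 1 ∧ m 1 < K + 1 ∧ 0 ≤ (m 0 : ℤ) + (m 1 : ℤ) - ((K + 1 : ℕ) : ℤ) + 1 ∧
          (m 0 : ℤ) + (m 1 : ℤ) - ((K + 1 : ℕ) : ℤ) + 1 < ((K + 1 : ℕ) : ℤ))
      → Module.finrank ℂ (LinearMap.ker (fMap 2 m K)) = 1) ∧
    (¬ (m 0 < K + 1 ∧ m 1 < K + 1 ∧ 0 ≤ (m 0 : ℤ) + (m 1 : ℤ) - ((K + 1 : ℕ) : ℤ) + 1 ∧
          (m 0 : ℤ) + (m 1 : ℤ) - ((K + 1 : ℕ) : ℤ) + 1 < ((K + 1 : ℕ) : ℤ))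
      → Function.Injective (fMap 2 m K))
  constructor
  · rintro ⟨h1, h2, h3, h4⟩
    have hm0 : m 0 ≤ K := by omega
    have hm1 : m 1 ≤ K := by omega
    have hK : K ≤ m 0 + m 1 := by omega
    have hker : fMap 2 m K (KTF.xC K (KTF.c0 K (m 0) (m 1))) = 0 :=
      KTF.xC_ker m K _ (KTF.c0_E0 hm1) (KTF.c0_E hm0 hm1 hK)
    have hne : KTF.xC K (KTF.c0 K (m 0) (m 1)) ≠ 0 := by
      intro h0
      have h1' := KTF.xC_at K (KTF.c0 K (m 0) (m 1)) (K - m 1) (K - (K - m 1))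
      rw [if_pos (by omega), KTF.c0_p, h0] at h1'
      have hz : KTF.xat (0 : V 2 K) (K - m 1) (K - (K - m 1)) = 0 := by
        unfold KTF.xat; split <;> simp
      rw [hz] at h1'
      exact one_ne_zero h1'.symm
    rw [finrank_eq_one_iff_of_nonzero'
      (⟨KTF.xC K (KTF.c0 K (m 0) (m 1)), LinearMap.mem_ker.mpr hker⟩ :
        LinearMap.ker (fMap 2 m K))
      (fun hh => hne ((Submodule.mk_eq_zero _ _).mp hh))]
    rintro ⟨x, hx⟩
    have hxker : fMap 2 m K x = 0 := LinearMap.mem_ker.mp hx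
    refine ⟨KTF.xat x (K - m 1) (K - (K - m 1)), ?_⟩
    apply Subtype.ext
    show KTF.xat x (K - m 1) (K - (K - m 1)) • KTF.xC K (KTF.c0 K (m 0) (m 1)) = x
    set t := KTF.xat x (K - m 1) (K - (K - m 1)) with ht
    set y := x - t • KTF.xC K (KTF.c0 K (m 0) (m 1)) with hy
    have hyker : fMap 2 m K y = 0 := by
      rw [hy, map_sub, map_smul, hxker, hker]; simp
    have hz : ∀ b, KTF.xat y b (K - b) = 0 := by
      apply KTF.mid hm0 hm1 hK (KTF.ker_supp K y) (KTF.ker_E0 m K y hyker)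
        (KTF.ker_E m K y hyker)
      rw [hy, KTF.xat_sub, KTF.xat_smul, KTF.xC_at, if_pos (by omega), KTF.c0_p, ← ht]
      ring
    have hy0 : y = 0 := KTF.eq_zero_of_coeffs K y hz
    rw [hy] at hy0
    exact (sub_eq_zero.mp hy0).symm
  · intro hcond
    have hcases : K < m 0 ∨ K < m 1 ∨ m 0 + m 1 < K := by
      by_contra hc
      push_neg at hc
      exact hcond ⟨by omega, by omega, by omega, by omega⟩
    rw [← LinearMap.ker_eq_bot]
    rw [Submodule.eq_bot_iff]
    intro x hx
    have hxker : fMap 2 m K x = 0 := LinearMap.mem_ker.mp hx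
    apply KTF.eq_zero_of_coeffs K x
    have hsupp := KTF.ker_supp K x
    have hE0 := KTF.ker_E0 m K x hxker
    have hE := KTF.ker_E m K x hxker
    rcases hcases with h | h | h
    · intro b
      exact KTF.bwd hsupp hE 0 (fun b _ hbK => by
        have : ((m 0 : ℤ) - b) ≠ 0 := by omega
        exact_mod_cast this) b (Nat.zero_le b)
    · intro b
      rcases le_or_gt b K with hb | hb
      · exact KTF.fwd hE0 hE K le_rfl (fun b hb' => by
          have : ((m 1 : ℤ) - K + b) ≠ 0 := by omega
          exact_mod_cast this) b hb
      · exact hsupp b hb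
    · have hf := KTF.fwd hE0 hE (m 0) (by omega) (fun b hb => by
        have : ((m 1 : ℤ) - K + b) ≠ 0 := by omega
        exact_mod_cast this)
      have hb := KTF.bwd hsupp hE (m 0 + 1) (fun b h1 h2 => by
        have : ((m 0 : ℤ) - b) ≠ 0 := by omega
        exact_mod_cast this)
      intro b
      rcases le_or_gt b (m 0) with hh | hh
      · exact hf b hh
      · exact hb b (by omega)
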